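/- Under the same sampling scheme (first index from distribution q on [d], then k-1 indices uniformly without replacement from the rest), for any distinct i, j in [d], the probability that both i and j belong to B equals (k-1)(k-2)/((d-1)(d-2)) + ((k-1)(d-k)/((d-1)(d-2))) * (q_i + q_j). -/

import Mathlib

open Finset

lemma aux_card_filter_subset {α : Type*} [DecidableEq α] (s t : Finset α) (hts : t ⊆ s)
    (n : ℕ) (h : t.card ≤ n) :
    ((s.powersetCard n).filter (fun A => t ⊆ A)).card
      = (s.card - t.card).choose (n - t.card) := by
  rw [← Finset.card_sdiff_of_subset hts, ← Finset.card_powersetCard (n - t.card) (s \ t)]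
  apply Finset.card_bij' (fun A _ => A \ t) (fun B _ => B ∪ t)
  · intro A hA
    simp only [mem_filter, mem_powersetCard] at hA
    obtain ⟨⟨hAs, hAc⟩, htA⟩ := hA
    simp only [mem_powersetCard]
    exact ⟨sdiff_subset_sdiff hAs le_rfl, by rw [card_sdiff_of_subset htA, hAc]⟩
  · intro B hB
    simp only [mem_powersetCard] at hB
    obtain ⟨hBs, hBc⟩ := hB
    have hdisj : Disjoint B t := (sdiff_disjoint.mono_left hBs)
    simp only [mem_filter, mem_powersetCard]
    refine ⟨⟨union_subset (hBs.trans sdiff_subset) hts, ?_⟩, subset_union_right⟩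
    rw [card_union_of_disjoint hdisj, hBc, Nat.sub_add_cancel h]
  · intro A hA
    simp only [mem_filter] at hA
    exact sdiff_union_of_subset hA.2
  · intro B hB
    simp only [mem_powersetCard] at hB
    have hdisj : Disjoint B t := (sdiff_disjoint.mono_left hB.1)
    simp [union_sdiff_distrib, hdisj.sdiff_eq_left]


/-- Sampling scheme: the first index `j'` is drawn from the distribution `q` on `Fin d`,
then `k-1` further distinct indices are drawn uniformly without replacement, i.e. a
uniformly random `(k-1)`-subset `A` of `univ.erase j'` is chosen, and `B = insert j' A`.
The probability that both `i` and `j` belong to `B` equals the stated closed form. -/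
theorem stmt_4 (d k : ℕ) (hk : 3 ≤ k) (hkd : k ≤ d)
    (q : Fin d → ℝ) (hq0 : ∀ i, 0 ≤ q i) (hq1 : ∑ i, q i = 1)
    (i j : Fin d) (hij : i ≠ j) :
    ∑ j' : Fin d, q j' *
        (((((univ.erase j').powersetCard (k - 1)).filter
              (fun A => i ∈ insert j' A ∧ j ∈ insert j' A)).card : ℝ) /
          ((((univ.erase j').powersetCard (k - 1)).card : ℝ))) =
      ((k : ℝ) - 1) * ((k : ℝ) - 2) / (((d : ℝ) - 1) * ((d : ℝ) - 2)) +
        ((k : ℝ) - 1) * ((d : ℝ) - k) / (((d : ℝ) - 1) * ((d : ℝ) - 2)) * (q i + q j) := by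

  have hd3 : 3 ≤ d := hk.trans hkd
  set D1 : ℝ := (d : ℝ) - 1 with hD1
  set D2 : ℝ := (d : ℝ) - 2 with hD2
  set K1 : ℝ := (k : ℝ) - 1 with hK1
  set K2 : ℝ := (k : ℝ) - 2 with hK2
  have hd3' : (3:ℝ) ≤ (d:ℝ) := by exact_mod_cast hd3
  have hD1pos : 0 < D1 := by rw [hD1]; linarith
  have hD2pos : 0 < D2 := by rw [hD2]; linarith
  -- cardinality of erase
  have herase : ∀ j' : Fin d, (univ.erase j').card = d - 1 := by
    intro j'; rw [card_erase_of_mem (mem_univ j'), card_univ, Fintype.card_fin]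
  -- denominator
  have hden : ∀ j' : Fin d,
      ((univ.erase j').powersetCard (k - 1)).card = (d-1).choose (k-1) := by
    intro j'; rw [Finset.card_powersetCard, herase]
  have hcpos : 0 < (d-1).choose (k-1) := Nat.choose_pos (by omega)
  have hc0 : ((d-1).choose (k-1) : ℝ) ≠ 0 := by positivity
  -- numerator counts
  have hnum1 : ∀ j' : Fin d, ∀ t : Fin d, j' ≠ t →
      (((univ.erase j').powersetCard (k - 1)).filter (fun A => t ∈ A)).card
        = (d-2).choose (k-2) := by
    intro j' t hne
    have := aux_card_filter_subset (univ.erase j') {t}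
      (by simp [Finset.singleton_subset_iff, hne.symm]) (k-1) (by simp; omega)
    simp only [Finset.singleton_subset_iff, card_singleton] at this
    rw [this, herase]
    congr 1 <;> omega
  have hnum2 : ∀ j' : Fin d, j' ≠ i → j' ≠ j →
      (((univ.erase j').powersetCard (k - 1)).filter (fun A => i ∈ A ∧ j ∈ A)).card
        = (d-3).choose (k-3) := by
    intro j' hi hj
    have hsub : ({i, j} : Finset (Fin d)) ⊆ univ.erase j' := by
      intro x hx
      simp only [mem_insert, mem_singleton] at hx
      rcases hx with h | h <;> subst h <;> simp [Ne.symm hi, Ne.symm hj] <;> omega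
    have hcard2 : ({i, j} : Finset (Fin d)).card = 2 := by
      rw [card_insert_of_notMem (by simp [hij]), card_singleton]
    have := aux_card_filter_subset (univ.erase j') {i, j} hsub (k-1) (by rw [hcard2]; omega)
    simp only [Finset.insert_subset_iff, Finset.singleton_subset_iff] at this
    rw [this, herase, hcard2]
    congr 1 <;> omega
  -- nat binomial identities, cast to ℝ
  have hA : D1 * ((d-2).choose (k-2) : ℝ) = ((d-1).choose (k-1) : ℝ) * K1 := by
    have hnat := Nat.add_one_mul_choose_eq (d-2) (k-2)
    rw [show d-2+1 = d-1 by omega, show k-2+1 = k-1 by omega] at hnat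
    have h' : ((d-1 : ℕ) : ℝ) * ((d-2).choose (k-2) : ℝ)
        = ((d-1).choose (k-1) : ℝ) * ((k-1 : ℕ) : ℝ) := by exact_mod_cast hnat
    rw [Nat.cast_sub (show 1 ≤ d by omega), Nat.cast_sub (show 1 ≤ k by omega)] at h'
    rw [hD1, hK1]
    push_cast at h' ⊢
    linarith
  have hB : D2 * ((d-3).choose (k-3) : ℝ) = ((d-2).choose (k-2) : ℝ) * K2 := by
    have hnat := Nat.add_one_mul_choose_eq (d-3) (k-3)
    rw [show d-3+1 = d-2 by omega, show k-3+1 = k-2 by omega] at hnat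
    have h' : ((d-2 : ℕ) : ℝ) * ((d-3).choose (k-3) : ℝ)
        = ((d-2).choose (k-2) : ℝ) * ((k-2 : ℕ) : ℝ) := by exact_mod_cast hnat
    rw [Nat.cast_sub (show 2 ≤ d by omega), Nat.cast_sub (show 2 ≤ k by omega)] at h'
    rw [hD2, hK2]
    push_cast at h' ⊢
    linarith
  set c1 : ℝ := K1 / D1 with hc1
  set c2 : ℝ := K1 * K2 / (D1 * D2) with hc2
  -- ratio values
  have key : ∀ j' : Fin d,
      (((((univ.erase j').powersetCard (k - 1)).filter
            (fun A => i ∈ insert j' A ∧ j ∈ insert j' A)).card : ℝ) /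
        ((((univ.erase j').powersetCard (k - 1)).card : ℝ)))
      = if j' = i ∨ j' = j then c1 else c2 := by
    intro j'
    rw [hden]
    by_cases h1 : j' = i
    · have hfc : (((univ.erase j').powersetCard (k - 1)).filter
            (fun A => i ∈ insert j' A ∧ j ∈ insert j' A))
          = (((univ.erase j').powersetCard (k - 1)).filter (fun A => j ∈ A)) := by
        apply filter_congr
        intro A hA
        have e1 : i = j' := h1.symm
        have e2 : j ≠ j' := by rw [h1]; exact Ne.symm hij
        simp only [mem_insert, eq_iff_iff]
        tauto
      rw [hfc, hnum1 j' j (by rw [h1]; exact hij), if_pos (Or.inl h1), hc1,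
        div_eq_div_iff hc0 (ne_of_gt hD1pos)]
      linarith
    · by_cases h2 : j' = j
      · have hfc : (((univ.erase j').powersetCard (k - 1)).filter
              (fun A => i ∈ insert j' A ∧ j ∈ insert j' A))
            = (((univ.erase j').powersetCard (k - 1)).filter (fun A => i ∈ A)) := by
          apply filter_congr
          intro A hA
          have e1 : j = j' := h2.symm
          have e2 : i ≠ j' := fun h => h1 h.symm
          simp only [mem_insert, eq_iff_iff]
          tauto
        rw [hfc, hnum1 j' i h1, if_pos (Or.inr h2), hc1,
          div_eq_div_iff hc0 (ne_of_gt hD1pos)]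
        linarith
      · have hfc : (((univ.erase j').powersetCard (k - 1)).filter
              (fun A => i ∈ insert j' A ∧ j ∈ insert j' A))
            = (((univ.erase j').powersetCard (k - 1)).filter (fun A => i ∈ A ∧ j ∈ A)) := by
          apply filter_congr
          intro A hA
          have e1 : i ≠ j' := fun h => h1 h.symm
          have e2 : j ≠ j' := fun h => h2 h.symm
          simp only [mem_insert, eq_iff_iff]
          tauto
        rw [hfc, hnum2 j' h1 h2, if_neg (by tauto), hc2,
          div_eq_div_iff hc0 (by positivity)]
        linear_combination D1 * hB + K2 * hA
  -- sum
  have hsum : ∀ j' : Fin d, j' ∈ (univ : Finset (Fin d)) →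
      q j' * (((((univ.erase j').powersetCard (k - 1)).filter
            (fun A => i ∈ insert j' A ∧ j ∈ insert j' A)).card : ℝ) /
        ((((univ.erase j').powersetCard (k - 1)).card : ℝ)))
      = q j' * c2 + (if j' = i then q j' * (c1 - c2) else 0)
          + (if j' = j then q j' * (c1 - c2) else 0) := by
    intro j' _
    rw [key j']
    by_cases h1 : j' = i
    · subst h1; rw [if_pos (Or.inl rfl), if_pos rfl, if_neg hij]; ring
    · by_cases h2 : j' = j
      · subst h2; rw [if_pos (Or.inr rfl), if_neg h1, if_pos rfl]; ring
      · rw [if_neg (by tauto), if_neg h1, if_neg h2]; ring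
  rw [Finset.sum_congr rfl hsum]
  rw [Finset.sum_add_distrib, Finset.sum_add_distrib, ← Finset.sum_mul, hq1,
    Finset.sum_ite_eq' univ i (fun j' => q j' * (c1 - c2)),
    Finset.sum_ite_eq' univ j (fun j' => q j' * (c1 - c2)), if_pos (mem_univ i),
    if_pos (mem_univ j), one_mul, hc1, hc2]
  field_simp
  ring
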